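/- Let K be a positive integer and A ∈ M₂(ℤ/Kℤ) a matrix with trace T and determinant D that is nonscalar modulo every prime dividing K. Then there exists a unit ϖ ∈ (ℤ/Kℤ)* such that A is SL₂(ℤ/Kℤ)-conjugate to the matrix (0, -ϖ⁻¹D; ϖ, T). -/

import Mathlib

open Matrix

/-- A matrix over `ℤ/Kℤ` is nonscalar modulo `p` (for `p ∣ K`) if its reduction
mod `p` is not a scalar matrix. -/
def NonscalarMod {K : ℕ} (p : ℕ) (h : p ∣ K) (A : Matrix (Fin 2) (Fin 2) (ZMod K)) : Prop :=
  ¬ ∃ lam : ZMod p, A.map (fun x => ZMod.castHom h (ZMod p) x) =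
      lam • (1 : Matrix (Fin 2) (Fin 2) (ZMod p))

lemma unit_of_all_primes {K : ℕ} [NeZero K] (u : ZMod K)
    (h : ∀ p : ℕ, p.Prime → ∀ hp : p ∣ K, ZMod.castHom hp (ZMod p) u ≠ 0) : IsUnit u := by
  rw [← ZMod.natCast_zmod_val u, ZMod.isUnit_iff_coprime]
  by_contra hc
  obtain ⟨p, pp, hpd⟩ := Nat.exists_prime_and_dvd (n := Nat.gcd u.val K) hc
  have h1 : p ∣ u.val := hpd.trans (Nat.gcd_dvd_left _ _)
  have h2 : p ∣ K := hpd.trans (Nat.gcd_dvd_right _ _)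
  apply h p pp h2
  have : (ZMod.castHom h2 (ZMod p)) u = ((u.val : ℕ) : ZMod p) := by
    conv_lhs => rw [← ZMod.natCast_zmod_val u]
    simp
  rw [this]
  exact (ZMod.natCast_eq_zero_iff _ _).mpr h1

lemma map_quad {R S : Type*} [CommRing R] [CommRing S] (f : R →+* S) (b c e x y : R) :
    f (c*x^2 + e*(x*y) - b*y^2) =
      f c * (f x)^2 + f e * (f x * f y) - f b * (f y)^2 := by
  simp only [_root_.map_sub, _root_.map_add, _root_.map_mul, _root_.map_pow]

lemma isUnit_pair {M N : Type*} [Monoid M] [Monoid N] {a : M} {b : N}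
    (ha : IsUnit a) (hb : IsUnit b) : IsUnit (a, b) := by
  obtain ⟨u, rfl⟩ := ha; obtain ⟨v, rfl⟩ := hb
  exact ⟨⟨(u, v), ((u⁻¹ : Mˣ), (v⁻¹ : Nˣ)), by simp [Prod.ext_iff], by simp [Prod.ext_iff]⟩, rfl⟩

lemma exists_unit_quad : ∀ K : ℕ, 0 < K → ∀ b c e : ZMod K,
    (∀ p : ℕ, p.Prime → ∀ hp : p ∣ K,
      ¬(ZMod.castHom hp (ZMod p) b = 0 ∧ ZMod.castHom hp (ZMod p) c = 0 ∧
        ZMod.castHom hp (ZMod p) e = 0)) →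
    ∃ x y : ZMod K, IsUnit (c * x^2 + e * (x*y) - b * y^2) := by
  intro K
  induction K using Nat.strong_induction_on with
  | _ K ih =>
  intro hK b c e h
  by_cases hK1 : K = 1
  · subst hK1; exact ⟨0, 0, isUnit_of_subsingleton _⟩
  obtain ⟨p, pp, hpK⟩ := Nat.exists_prime_and_dvd hK1
  haveI : NeZero K := ⟨hK.ne'⟩
  set q := p ^ K.factorization p with hqdef
  set m := ordCompl[p] K with hmdef
  have hqm : q * m = K := Nat.ordProj_mul_ordCompl_eq_self K p
  have hco : Nat.Coprime q m := (Nat.coprime_ordCompl pp hK.ne').pow_left _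
  have hm0 : 0 < m := Nat.ordCompl_pos p hK.ne'
  have he0 : 0 < K.factorization p := pp.factorization_pos_of_dvd hK.ne' hpK
  have hq2 : 1 < q := Nat.one_lt_pow he0.ne' pp.one_lt
  have hmK : m < K := by
    rw [← hqm]
    calc m = 1 * m := (one_mul m).symm
    _ < q * m := (Nat.mul_lt_mul_right hm0).mpr hq2
  haveI : NeZero q := ⟨(Nat.pos_of_ne_zero (fun h0 => by simp [h0] at hq2)).ne'⟩
  haveI : NeZero m := ⟨hm0.ne'⟩
  have hqK : q ∣ K := ⟨m, hqm.symm⟩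
  have hmKd : m ∣ K := ⟨q, by rw [mul_comm]; exact hqm.symm⟩
  have hpq : p ∣ q := dvd_pow_self p he0.ne'
  -- first component in ZMod q
  have key1 : ∃ x y : ZMod q,
      IsUnit ((ZMod.castHom hqK (ZMod q) c) * x^2 + (ZMod.castHom hqK (ZMod q) e) * (x*y)
        - (ZMod.castHom hqK (ZMod q) b) * y^2) := by
    have comp_eq : (ZMod.castHom hpq (ZMod p)).comp (ZMod.castHom hqK (ZMod q)) =
        ZMod.castHom hpK (ZMod p) := RingHom.ext_zmod _ _
    have hcast : ∀ z : ZMod K, ZMod.castHom hpq (ZMod p) (ZMod.castHom hqK (ZMod q) z)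
        = ZMod.castHom hpK (ZMod p) z := fun z => by
      rw [← comp_eq]; rfl
    have hp' := h p pp hpK
    have main : ∀ x y : ZMod q,
        (ZMod.castHom hpK (ZMod p) c) * (ZMod.castHom hpq (ZMod p) x)^2
          + (ZMod.castHom hpK (ZMod p) e) *
            (ZMod.castHom hpq (ZMod p) x * ZMod.castHom hpq (ZMod p) y)
          - (ZMod.castHom hpK (ZMod p) b) * (ZMod.castHom hpq (ZMod p) y)^2 ≠ 0 →
        IsUnit ((ZMod.castHom hqK (ZMod q) c) * x^2 + (ZMod.castHom hqK (ZMod q) e) * (x*y)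
          - (ZMod.castHom hqK (ZMod q) b) * y^2) := by
      intro x y hxy
      apply unit_of_all_primes
      intro r rp hrq
      have hrp : r = p := by
        have : r ∣ p := rp.dvd_of_dvd_pow (hqdef ▸ hrq)
        exact (Nat.prime_dvd_prime_iff_eq rp pp).mp this
      subst hrp
      rw [map_quad, hcast, hcast, hcast]
      exact hxy
    by_cases hc' : ZMod.castHom hpK (ZMod p) c ≠ 0
    · exact ⟨1, 0, main 1 0 (by simp only [_root_.map_one, _root_.map_zero]; simpa using hc')⟩
    by_cases hb' : ZMod.castHom hpK (ZMod p) b ≠ 0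
    · exact ⟨0, 1, main 0 1 (by simp only [_root_.map_one, _root_.map_zero]; simpa using hb')⟩
    push_neg at hc' hb'
    have he' : ZMod.castHom hpK (ZMod p) e ≠ 0 := fun h0 => hp' ⟨hb', hc', h0⟩
    exact ⟨1, 1, main 1 1 (by simp only [_root_.map_one, _root_.map_zero]; simpa [hc', hb'] using he')⟩
  -- second component via IH
  have key2 : ∃ x y : ZMod m,
      IsUnit ((ZMod.castHom hmKd (ZMod m) c) * x^2 + (ZMod.castHom hmKd (ZMod m) e) * (x*y)
        - (ZMod.castHom hmKd (ZMod m) b) * y^2) := by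
    apply ih m hmK hm0
    intro r rp hrm
    have hrK : r ∣ K := hrm.trans hmKd
    have comp_eq : (ZMod.castHom hrm (ZMod r)).comp (ZMod.castHom hmKd (ZMod m)) =
        ZMod.castHom hrK (ZMod r) := RingHom.ext_zmod _ _
    have hcast : ∀ z : ZMod K, ZMod.castHom hrm (ZMod r) (ZMod.castHom hmKd (ZMod m) z)
        = ZMod.castHom hrK (ZMod r) z := fun z => by rw [← comp_eq]; rfl
    rw [hcast, hcast, hcast]
    exact h r rp hrK
  obtain ⟨x₁, y₁, hu1⟩ := key1
  obtain ⟨x₂, y₂, hu2⟩ := key2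
  -- combine via CRT
  let φ : ZMod K ≃+* ZMod q × ZMod m :=
    (ZMod.ringEquivCongr hqm.symm).trans (ZMod.chineseRemainder hco)
  have hfst : ∀ z : ZMod K, (φ z).1 = ZMod.castHom hqK (ZMod q) z := fun z => by
    have : (RingHom.fst (ZMod q) (ZMod m)).comp ((φ : ZMod K ≃+* _) : ZMod K →+* ZMod q × ZMod m)
        = ZMod.castHom hqK (ZMod q) := RingHom.ext_zmod _ _
    exact congrFun (congrArg (fun f => f.toFun) this) z
  have hsnd : ∀ z : ZMod K, (φ z).2 = ZMod.castHom hmKd (ZMod m) z := fun z => by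
    have : (RingHom.snd (ZMod q) (ZMod m)).comp ((φ : ZMod K ≃+* _) : ZMod K →+* ZMod q × ZMod m)
        = ZMod.castHom hmKd (ZMod m) := RingHom.ext_zmod _ _
    exact congrFun (congrArg (fun f => f.toFun) this) z
  refine ⟨φ.symm (x₁, x₂), φ.symm (y₁, y₂), ?_⟩
  have hφu : IsUnit ((φ : ZMod K →+* ZMod q × ZMod m) (c * φ.symm (x₁, x₂)^2
      + e * (φ.symm (x₁, x₂) * φ.symm (y₁, y₂)) - b * φ.symm (y₁, y₂)^2)) := by
    rw [map_quad (φ : ZMod K →+* ZMod q × ZMod m)]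
    have e1 : (φ : ZMod K →+* ZMod q × ZMod m) (φ.symm (x₁, x₂)) = (x₁, x₂) :=
      φ.apply_symm_apply _
    have e2 : (φ : ZMod K →+* ZMod q × ZMod m) (φ.symm (y₁, y₂)) = (y₁, y₂) :=
      φ.apply_symm_apply _
    rw [e1, e2]
    have hb' : (φ : ZMod K →+* ZMod q × ZMod m) b =
        (ZMod.castHom hqK (ZMod q) b, ZMod.castHom hmKd (ZMod m) b) :=
      Prod.ext (hfst b) (hsnd b)
    have hc' : (φ : ZMod K →+* ZMod q × ZMod m) c =
        (ZMod.castHom hqK (ZMod q) c, ZMod.castHom hmKd (ZMod m) c) :=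
      Prod.ext (hfst c) (hsnd c)
    have he' : (φ : ZMod K →+* ZMod q × ZMod m) e =
        (ZMod.castHom hqK (ZMod q) e, ZMod.castHom hmKd (ZMod m) e) :=
      Prod.ext (hfst e) (hsnd e)
    rw [hb', hc', he']
    exact isUnit_pair hu1 hu2
  have h2 := hφu.map (φ.symm : ZMod q × ZMod m →+* ZMod K)
  have h3 : ∀ z : ZMod K, (φ.symm : ZMod q × ZMod m →+* ZMod K)
      ((φ : ZMod K →+* ZMod q × ZMod m) z) = z := fun z => φ.symm_apply_apply z
  rwa [h3] at h2

theorem stmt_9 (K : ℕ) (hK : 0 < K) (A : Matrix (Fin 2) (Fin 2) (ZMod K))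
    (hA : ∀ p : ℕ, p.Prime → ∀ h : p ∣ K, NonscalarMod p h A) :
    ∃ (ϖ : (ZMod K)ˣ) (g : Matrix.SpecialLinearGroup (Fin 2) (ZMod K)),
      (g : Matrix (Fin 2) (Fin 2) (ZMod K)) * A *
        ((g⁻¹ : Matrix.SpecialLinearGroup (Fin 2) (ZMod K)) : Matrix (Fin 2) (Fin 2) (ZMod K)) =
      !![0, -((ϖ⁻¹ : (ZMod K)ˣ) : ZMod K) * A.det; (ϖ : ZMod K), A.trace] := by
  obtain ⟨x, y, hu⟩ := exists_unit_quad K hK (A 0 1) (A 1 0) (A 1 1 - A 0 0) (by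
    intro p pp hp ⟨h1, h2, h3⟩
    apply hA p pp hp
    refine ⟨ZMod.castHom hp (ZMod p) (A 0 0), ?_⟩
    have h3' : ZMod.castHom hp (ZMod p) (A 1 1) = ZMod.castHom hp (ZMod p) (A 0 0) := by
      rw [map_sub, sub_eq_zero] at h3; exact h3
    ext i j
    fin_cases i <;> fin_cases j
    · simp [Matrix.map_apply, Matrix.one_apply]
    · simpa [Matrix.map_apply, Matrix.one_apply] using h1
    · simpa [Matrix.map_apply, Matrix.one_apply] using h2
    · simpa [Matrix.map_apply, Matrix.one_apply] using h3')
  set a := A 0 0 with ha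
  set b := A 0 1 with hb
  set c := A 1 0 with hc
  set d := A 1 1 with hd
  refine ⟨hu.unit, ?_⟩
  set ϖ : (ZMod K)ˣ := hu.unit with hϖ
  set u : ZMod K := ((ϖ⁻¹ : (ZMod K)ˣ) : ZMod K) with hu'
  have hval : (ϖ : ZMod K) = c * x^2 + (d - a) * (x*y) - b * y^2 := hu.unit_spec
  have hinv : u * (c * x^2 + (d - a) * (x*y) - b * y^2) = 1 := by
    rw [← hval]; exact Units.inv_mul ϖ
  set P : Matrix (Fin 2) (Fin 2) (ZMod K) :=
    !![x, u * (a*x + b*y); y, u * (c*x + d*y)] with hP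
  have hdet : P.det = 1 := by
    rw [hP, Matrix.det_fin_two_of]
    linear_combination hinv
  refine ⟨(⟨P, hdet⟩ : Matrix.SpecialLinearGroup (Fin 2) (ZMod K))⁻¹, ?_⟩
  rw [show (((⟨P, hdet⟩ : Matrix.SpecialLinearGroup (Fin 2) (ZMod K))⁻¹)⁻¹ :
      Matrix.SpecialLinearGroup (Fin 2) (ZMod K)) = ⟨P, hdet⟩ from inv_inv _]
  have hcoe : ((((⟨P, hdet⟩ : Matrix.SpecialLinearGroup (Fin 2) (ZMod K)))⁻¹ :
      Matrix.SpecialLinearGroup (Fin 2) (ZMod K)) : Matrix (Fin 2) (Fin 2) (ZMod K)) =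
      P.adjugate := by
    exact Matrix.SpecialLinearGroup.coe_inv _
  rw [hcoe]
  show P.adjugate * A * P = _
  have hPM : A * P = P * !![0, -u * A.det; (ϖ : ZMod K), A.trace] := by
    rw [Matrix.det_fin_two A, Matrix.trace_fin_two A, ← ha, ← hb, ← hc, ← hd]
    ext i j
    fin_cases i <;> fin_cases j <;>
      simp [Matrix.mul_apply, Fin.sum_univ_two, hP, hval, ← ha, ← hb, ← hc, ← hd]
    · linear_combination (-(a*x + b*y)) * hinv
    · ring
    · linear_combination (-(c*x + d*y)) * hinv
    · ring
  rw [mul_assoc, hPM, ← mul_assoc, Matrix.adjugate_mul, hdet, one_smul, one_mul]
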